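/- Let G be a connected bipartite graph with bipartition V = V_1 ∪ V_2 where |V_1| = |V_2| = m. If B is an m×m real matrix with orthogonal rows and columns (B B^T = B^T B = I) whose zero pattern matches the bipartite adjacency structure of G (i.e., B_{ij} ≠ 0 iff the i-th vertex of V_1 is adjacent to the j-th vertex of V_2), then the matrix M = (1/√2)·[[I, B],[B^T, -I]] is a symmetric orthogonal matrix whose off-diagonal zero pattern matches the adjacency matrix of G; in particular M has exactly two distinct eigenvalues, 1 and -1. -/
import Mathlib

open Matrix

theorem stmt_2 {m : ℕ} (G : SimpleGraph (Fin m ⊕ Fin m)) (hconn : G.Connected)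
    (hbip : ∀ i j : Fin m, ¬ G.Adj (Sum.inl i) (Sum.inl j) ∧ ¬ G.Adj (Sum.inr i) (Sum.inr j))
    (B : Matrix (Fin m) (Fin m) ℝ)
    (hB1 : B * Bᵀ = 1) (hB2 : Bᵀ * B = 1)
    (hpat : ∀ i j : Fin m, B i j ≠ 0 ↔ G.Adj (Sum.inl i) (Sum.inr j)) :
    let M : Matrix (Fin m ⊕ Fin m) (Fin m ⊕ Fin m) ℝ :=
      (Real.sqrt 2)⁻¹ • Matrix.fromBlocks 1 B Bᵀ (-1)
    M.IsSymm ∧ M * M = 1 ∧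
    (∀ u v : Fin m ⊕ Fin m, u ≠ v → (M u v ≠ 0 ↔ G.Adj u v)) ∧
    spectrum ℝ M = {1, -1} := by
  intro M
  have hMdef : M = (Real.sqrt 2)⁻¹ • Matrix.fromBlocks 1 B Bᵀ (-1) := rfl
  clear_value M
  have hs2 : Real.sqrt 2 ≠ 0 := by positivity
  have hc : (Real.sqrt 2)⁻¹ ≠ 0 := inv_ne_zero hs2
  -- get an element of Fin m
  obtain ⟨v⟩ := hconn.nonempty
  obtain ⟨i⟩ : Nonempty (Fin m) := by cases v with
    | inl i => exact ⟨i⟩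
    | inr i => exact ⟨i⟩
  -- symmetry
  have hsymm : M.IsSymm := by
    rw [Matrix.IsSymm, hMdef, Matrix.transpose_smul, Matrix.fromBlocks_transpose]
    simp
  -- M * M = 1
  have hMsq : M * M = 1 := by
    rw [hMdef, smul_mul_smul_comm, Matrix.fromBlocks_multiply]
    have h1 : (1 : Matrix (Fin m) (Fin m) ℝ) * 1 + B * Bᵀ = (2:ℝ) • 1 := by
      rw [hB1]; rw [one_mul]; rw [two_smul]
    have h2 : (1 : Matrix (Fin m) (Fin m) ℝ) * B + B * (-1) = 0 := by simp
    have h3 : Bᵀ * (1 : Matrix (Fin m) (Fin m) ℝ) + (-1) * Bᵀ = 0 := by simp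
    have h4 : Bᵀ * B + (-1 : Matrix (Fin m) (Fin m) ℝ) * (-1) = (2:ℝ) • 1 := by
      rw [hB2]; simp [two_smul]
    rw [h1, h2, h3, h4]
    have h5 : ((2:ℝ) • (1 : Matrix (Fin m) (Fin m) ℝ)) = (2:ℝ) • 1 := rfl
    have : Matrix.fromBlocks ((2:ℝ) • (1 : Matrix (Fin m) (Fin m) ℝ)) 0 0 ((2:ℝ) • 1)
        = (2:ℝ) • (1 : Matrix (Fin m ⊕ Fin m) (Fin m ⊕ Fin m) ℝ) := by
      rw [← Matrix.fromBlocks_one, Matrix.fromBlocks_smul]; simp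
    rw [this, smul_smul]
    have hval : (Real.sqrt 2)⁻¹ * (Real.sqrt 2)⁻¹ * 2 = 1 := by
      rw [← mul_inv, Real.mul_self_sqrt (by norm_num : (0:ℝ) ≤ 2)]
      norm_num
    rw [hval, one_smul]
  -- entry at (inl i, inl i)
  have hentry : M (Sum.inl i) (Sum.inl i) = (Real.sqrt 2)⁻¹ := by
    rw [hMdef]; simp
  have hlt : (Real.sqrt 2)⁻¹ < 1 := by
    have h1 : (1:ℝ) < Real.sqrt 2 := by
      rw [show (1:ℝ) = Real.sqrt 1 from (Real.sqrt_one).symm]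
      exact Real.sqrt_lt_sqrt (by norm_num) (by norm_num)
    exact inv_lt_one_of_one_lt₀ h1
  have hpos : (0:ℝ) < (Real.sqrt 2)⁻¹ := by positivity
  have hMne1 : M ≠ 1 := by
    intro h
    have := congrFun (congrFun h (Sum.inl i)) (Sum.inl i)
    rw [hentry, Matrix.one_apply_eq] at this
    exact absurd this (ne_of_lt hlt)
  have hMneN : M ≠ -1 := by
    intro h
    have := congrFun (congrFun h (Sum.inl i)) (Sum.inl i)
    rw [hentry] at this
    have h2 : ((-1 : Matrix (Fin m ⊕ Fin m) (Fin m ⊕ Fin m) ℝ)) (Sum.inl i) (Sum.inl i) = -1 := by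
      simp
    rw [h2] at this
    linarith
  -- pattern
  have hpat' : ∀ u v : Fin m ⊕ Fin m, u ≠ v → (M u v ≠ 0 ↔ G.Adj u v) := by
    intro u v huv
    rw [hMdef]
    cases u with
    | inl a => cases v with
      | inl b =>
        have hab : a ≠ b := by rintro rfl; exact huv rfl
        simp [Matrix.one_apply_ne hab, (hbip a b).1]
      | inr b =>
        simp [hc, hpat a b]
    | inr a => cases v with
      | inl b =>
        rw [show G.Adj (Sum.inr a) (Sum.inl b) ↔ G.Adj (Sum.inl b) (Sum.inr a) from
          ⟨fun h => h.symm, fun h => h.symm⟩]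
        simp [hc, hpat b a]
      | inr b =>
        have hab : a ≠ b := by rintro rfl; exact huv rfl
        simp [Matrix.one_apply_ne hab, (hbip a b).2]
  -- spectrum
  have hspec : spectrum ℝ M = {1, -1} := by
    ext x
    simp only [Set.mem_insert_iff, Set.mem_singleton_iff, spectrum.mem_iff,
      Algebra.algebraMap_eq_smul_one]
    constructor
    · intro hx
      by_contra hcon
      push_neg at hcon
      obtain ⟨hx1, hx2⟩ := hcon
      apply hx
      have hxx : x * x - 1 ≠ 0 := by
        intro h
        have h' : x * x = 1 := by linarith
        rcases mul_self_eq_one_iff.mp h' with h1 | h1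
        · exact hx1 h1
        · exact hx2 h1
      have e1 : (x • (1 : Matrix (Fin m ⊕ Fin m) (Fin m ⊕ Fin m) ℝ)) * (x • 1) = (x * x) • 1 := by
        rw [smul_mul_smul_comm, one_mul]
      have e2 : (x • (1 : Matrix (Fin m ⊕ Fin m) (Fin m ⊕ Fin m) ℝ)) * M = x • M := by
        rw [smul_mul_assoc, one_mul]
      have e3 : M * (x • (1 : Matrix (Fin m ⊕ Fin m) (Fin m ⊕ Fin m) ℝ)) = x • M := by
        rw [mul_smul_comm, mul_one]
      have key : (x • (1 : Matrix (Fin m ⊕ Fin m) (Fin m ⊕ Fin m) ℝ) - M) * (x • 1 + M)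
          = (x * x - 1) • 1 := by
        rw [sub_mul, mul_add, mul_add, e1, e2, e3, hMsq, sub_smul, one_smul]
        abel
      have key2 : (x • (1 : Matrix (Fin m ⊕ Fin m) (Fin m ⊕ Fin m) ℝ) + M) * (x • 1 - M)
          = (x * x - 1) • 1 := by
        rw [add_mul, mul_sub, mul_sub, e1, e2, e3, hMsq, sub_smul, one_smul]
        abel
      refine isUnit_iff_exists.mpr ⟨(x * x - 1)⁻¹ • (x • 1 + M), ?_, ?_⟩
      · rw [mul_smul_comm, key, smul_smul, inv_mul_cancel₀ hxx, one_smul]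
      · rw [smul_mul_assoc, key2, smul_smul, inv_mul_cancel₀ hxx, one_smul]
    · rintro (rfl | rfl)
      · rw [one_smul]
        rintro ⟨u, hu⟩
        have hz : ((1 : Matrix (Fin m ⊕ Fin m) (Fin m ⊕ Fin m) ℝ) - M) * (1 + M) = 0 := by
          rw [sub_mul, mul_add, mul_add, one_mul, one_mul, mul_one, hMsq]
          abel
        have h0 : (1 : Matrix (Fin m ⊕ Fin m) (Fin m ⊕ Fin m) ℝ) + M = 0 := by
          calc (1 : Matrix (Fin m ⊕ Fin m) (Fin m ⊕ Fin m) ℝ) + M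
              = (↑u⁻¹ * ↑u) * (1 + M) := by rw [u.inv_mul, one_mul]
            _ = ↑u⁻¹ * ((1 - M) * (1 + M)) := by rw [mul_assoc, hu]
            _ = 0 := by rw [hz, mul_zero]
        exact hMneN (eq_neg_of_add_eq_zero_right h0)
      · rw [neg_smul, one_smul]
        have heq : -(1 : Matrix (Fin m ⊕ Fin m) (Fin m ⊕ Fin m) ℝ) - M = -(1 + M) := by abel
        rw [heq, IsUnit.neg_iff]
        rintro ⟨u, hu⟩
        have hz : ((1 : Matrix (Fin m ⊕ Fin m) (Fin m ⊕ Fin m) ℝ) + M) * (1 - M) = 0 := by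
          rw [mul_sub, add_mul, add_mul]
          simp only [one_mul, mul_one]
          rw [hMsq]
          abel
        have h0 : (1 : Matrix (Fin m ⊕ Fin m) (Fin m ⊕ Fin m) ℝ) - M = 0 := by
          calc (1 : Matrix (Fin m ⊕ Fin m) (Fin m ⊕ Fin m) ℝ) - M
              = (↑u⁻¹ * ↑u) * (1 - M) := by rw [u.inv_mul, one_mul]
            _ = ↑u⁻¹ * ((1 + M) * (1 - M)) := by rw [mul_assoc, hu]
            _ = 0 := by rw [hz, mul_zero]
        exact hMne1 (sub_eq_zero.mp h0).symm
  exact ⟨hsymm, hMsq, hpat', hspec⟩
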